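/- Let 0 ≠ b ∈ P_+, regarded as an element of the extended affine Weyl group Ŵ, let b = π_r s_{j_l}⋯s_{j_1} be a reduced decomposition with λ-sequence {α̃^1,…,α̃^l}, and let 1 ≤ a < i ≤ l. Then exactly one of the following holds: s_{α̃^i}(α̃^a) is a negative affine root, or s_{α̃^i}(α̃^a) = α̃^p for some p < i. In particular, s_{α̃^i}(α̃^a) ∈ R̃_+ if and only if s_{α̃^i}(α̃^a) ∈ {α̃^1,…,α̃^{i−1}}. -/

import Mathlib

open scoped RealInnerProductSpace Classical

noncomputable section

/-- Euclidean space ℝⁿ. -/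
abbrev EV (n : ℕ) := EuclideanSpace ℝ (Fin n)

/-- ν_α = (α,α)/2. -/
def nuu {n : ℕ} (α : EV n) : ℝ := ⟪α, α⟫ / 2

/-- α^∨ = 2α/(α,α). -/
def coroot {n : ℕ} (α : EV n) : EV n := (2 / ⟪α, α⟫) • α

/-- the reflection s_α. -/
def srefl {n : ℕ} (α : EV n) : EV n → EV n :=
  fun z => z - (2 * ⟪z, α⟫ / ⟪α, α⟫) • α

/-- the affine reflection s_ã attached to ã = [α, ν_α j], acting linearly on ℝⁿ × ℝ. -/
def aRefl {n : ℕ} (p : EV n × ℝ) : EV n × ℝ → EV n × ℝ :=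
  fun z => z - (2 * ⟪z.1, p.1⟫ / ⟪p.1, p.1⟫) • p

/-- the translation element b' ∈ Ŵ, b'([z,ζ]) = [z, ζ − (z,b)]. -/
def transl {n : ℕ} (b : EV n) : EV n × ℝ → EV n × ℝ :=
  fun z => (z.1, z.2 - ⟪z.1, b⟫)

/-- extension of a nonaffine transformation to ℝⁿ × ℝ. -/
def affExt {n : ℕ} (w : EV n → EV n) : EV n × ℝ → EV n × ℝ :=
  fun z => (w z.1, z.2)

/-- An irreducible reduced crystallographic root system in ℝⁿ, with a fixed system of
positive/simple roots, normalized so that (α,α) = 2 for short roots; `hishort` is the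
highest short root ϑ and `hiroot` the highest root θ. -/
structure RootCtx (n : ℕ) where
  R : Finset (EV n)
  pos : Finset (EV n)
  simple : Fin n → EV n
  hishort : EV n
  hiroot : EV n
  nonzero : ∀ α ∈ R, α ≠ (0 : EV n)
  neg_mem : ∀ α ∈ R, -α ∈ R
  reduced : ∀ α ∈ R, ∀ t : ℝ, t • α ∈ R → t = 1 ∨ t = -1
  crys : ∀ α ∈ R, ∀ β ∈ R, ∃ m : ℤ, 2 * ⟪β, α⟫ / ⟪α, α⟫ = (m : ℝ)
  reflect_mem : ∀ α ∈ R, ∀ β ∈ R, β - (2 * ⟪β, α⟫ / ⟪α, α⟫) • α ∈ R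
  span_top : Submodule.span ℝ (R : Set (EV n)) = ⊤
  pos_subset : pos ⊆ R
  pos_iff : ∀ α ∈ R, (α ∈ pos ↔ -α ∉ pos)
  simple_pos : ∀ i, simple i ∈ pos
  simple_inj : Function.Injective simple
  pos_sum : ∀ α ∈ pos, ∃ f : Fin n → ℕ, α = ∑ i, (f i : ℝ) • simple i
  irred : ∀ S : Finset (EV n), S ⊆ R → S.Nonempty →
      (∀ α ∈ S, ∀ β ∈ R, β ∉ S → ⟪α, β⟫ = 0) → S = R
  normalized : ∀ α ∈ R, (∀ β ∈ R, ⟪α, α⟫ ≤ ⟪β, β⟫) → ⟪α, α⟫ = 2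
  hishort_pos : hishort ∈ pos
  hishort_short : ⟪hishort, hishort⟫ = 2
  hishort_high : ∀ α ∈ R, ⟪α, α⟫ = 2 →
      ∃ f : Fin n → ℕ, hishort - α = ∑ i, (f i : ℝ) • simple i
  hiroot_pos : hiroot ∈ pos
  hiroot_high : ∀ α ∈ R, ∃ f : Fin n → ℕ, hiroot - α = ∑ i, (f i : ℝ) • simple i

namespace RootCtx

variable {n : ℕ} (c : RootCtx n)

/-- word in the simple reflections of W; the letters are listed in the order of
application (the first letter of the list acts first), so `[i₁, …, i_l]`
represents s_{i_l} ⋯ s_{i_1}. -/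
def wWord (L : List (Fin n)) : EV n → EV n :=
  L.foldl (fun f i => srefl (c.simple i) ∘ f) id

/-- membership in the Weyl group W. -/
def IsWeyl (w : EV n → EV n) : Prop := ∃ L : List (Fin n), w = c.wWord L

/-- λ(w) = {α ∈ R₊ : w(α) ∈ R₋}. -/
def lamW (w : EV n → EV n) : Finset (EV n) :=
  c.pos.filter (fun α => -(w α) ∈ c.pos)

/-- λ_ν(w). -/
def lamWnu (w : EV n → EV n) (ν : ℝ) : Finset (EV n) :=
  (c.lamW w).filter (fun α => nuu α = ν)

/-- the length l(w) = |λ(w)| of w ∈ W. -/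
def lenW (w : EV n → EV n) : ℕ := (c.lamW w).card

/-- ρ_ν = (1/2) Σ_{α ∈ R₊, ν_α = ν} α. -/
def rho (ν : ℝ) : EV n :=
  (1 / 2 : ℝ) • ∑ α ∈ c.pos.filter (fun α => nuu α = ν), α

/-- ρ_ν^∨ = ρ_ν / ν. -/
def rhoCheck (ν : ℝ) : EV n := ν⁻¹ • c.rho ν

/-- the affine root system R̃ ⊂ ℝⁿ × ℝ. -/
def aR : Set (EV n × ℝ) := {p | ∃ α ∈ c.R, ∃ j : ℤ, p = (α, nuu α * j)}

/-- positive affine roots. -/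
def aPos : Set (EV n × ℝ) :=
  {p | p ∈ c.aR ∧ (0 < p.2 ∨ (p.2 = 0 ∧ p.1 ∈ c.pos))}

/-- negative affine roots. -/
def aNeg : Set (EV n × ℝ) := {p | -p ∈ c.aPos}

/-- the affine simple roots α_0, α_1, …, α_n; the index 0 corresponds to
α₀ = [−ϑ, 1]. -/
def asimple : Fin (n + 1) → EV n × ℝ :=
  fun i => if h : i = 0 then (-c.hishort, (1 : ℝ)) else (c.simple (i.pred h), (0 : ℝ))

/-- the affine simple reflections s_0, s_1, …, s_n. -/
def aS (i : Fin (n + 1)) : EV n × ℝ → EV n × ℝ := aRefl (c.asimple i)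

/-- word in the affine simple reflections (letters in order of application). -/
def affWord (L : List (Fin (n + 1))) : EV n × ℝ → EV n × ℝ :=
  L.foldl (fun f i => c.aS i ∘ f) id

/-- the weight lattice P. -/
def PwSet : Set (EV n) :=
  {b | ∀ i, ∃ m : ℤ, 2 * ⟪b, c.simple i⟫ / ⟪c.simple i, c.simple i⟫ = (m : ℝ)}

/-- the dominant weights P₊. -/
def PplusSet : Set (EV n) :=
  {b | b ∈ c.PwSet ∧ ∀ i, 0 ≤ ⟪b, c.simple i⟫}

/-- membership in the extended affine Weyl group Ŵ = W ⋉ P,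
via the normal form w·b' with w ∈ W and b ∈ P. -/
def IsExtW (f : EV n × ℝ → EV n × ℝ) : Prop :=
  ∃ w b, c.IsWeyl w ∧ b ∈ c.PwSet ∧ f = affExt w ∘ transl b

/-- membership in Π = {π ∈ Ŵ : π(R̃₊) = R̃₊}. -/
def IsPi (f : EV n × ℝ → EV n × ℝ) : Prop :=
  c.IsExtW f ∧ f '' c.aPos = c.aPos

/-- the λ-set λ(ŵ) = R̃₊ ∩ ŵ⁻¹(R̃₋) of an affine transformation. -/
def aLam (f : EV n × ℝ → EV n × ℝ) : Set (EV n × ℝ) :=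
  {p | p ∈ c.aPos ∧ f p ∈ c.aNeg}

/-- the ν-part λ_ν(ŵ). -/
def aLamNu (f : EV n × ℝ → EV n × ℝ) (ν : ℝ) : Set (EV n × ℝ) :=
  {p | p ∈ c.aLam f ∧ nuu p.1 = ν}

/-- the length l(ŵ) = |λ(ŵ)|. -/
def aLen (f : EV n × ℝ → EV n × ℝ) : ℕ := (c.aLam f).ncard

/-- `(π, L)` is a reduced decomposition ŵ = π_r s_{i_l} ⋯ s_{i_1}: π ∈ Π and
the word length is minimal among all such presentations of the same element. -/
def IsReducedA (π : EV n × ℝ → EV n × ℝ) (L : List (Fin (n + 1))) : Prop :=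
  c.IsPi π ∧
    ∀ (π' : EV n × ℝ → EV n × ℝ) (L' : List (Fin (n + 1))),
      c.IsPi π' → π' ∘ c.affWord L' = π ∘ c.affWord L → L.length ≤ L'.length

/-- the λ-sequence α̃¹, α̃², … of a word (0-based indexing):
α̃^{k+1} = s_{i_1} s_{i_2} ⋯ s_{i_k}(α_{i_{k+1}}). -/
def lamSeq (L : List (Fin (n + 1))) (k : Fin L.length) : EV n × ℝ :=
  ((L.take k).foldr (fun i f => c.aS i ∘ f) id) (c.asimple (L.get k))

/-- the λ-sequence of a word in W (0-based indexing). -/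
def lamSeqW (L : List (Fin n)) (k : Fin L.length) : EV n :=
  ((L.take k).foldr (fun i f => srefl (c.simple i) ∘ f) id) (c.simple (L.get k))

end RootCtx
namespace RootCtx

variable {n : ℕ} (c : RootCtx n)

lemma inner_self_pos0 {α : EV n} (h : α ≠ 0) : 0 < ⟪α, α⟫ :=
  lt_of_le_of_ne real_inner_self_nonneg (fun he => h (inner_self_eq_zero.mp he.symm))

lemma inner_self_pos' {α : EV n} (h : α ∈ c.R) : 0 < ⟪α, α⟫ :=
  inner_self_pos0 (c.nonzero α h)

lemma srefl_inner (α x y : EV n) : ⟪srefl α x, srefl α y⟫ = ⟪x, y⟫ := by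
  rcases eq_or_ne α 0 with rfl | h
  · simp [srefl]
  have hα : ⟪α, α⟫ ≠ 0 := ne_of_gt (inner_self_pos0 h)
  simp only [srefl, inner_sub_left, inner_sub_right, real_inner_smul_left,
    real_inner_smul_right]
  rw [real_inner_comm α y]
  revert hα
  generalize ⟪x, y⟫ = u
  generalize ⟪x, α⟫ = a
  generalize ⟪y, α⟫ = b
  generalize ⟪α, α⟫ = A
  intro hA
  field_simp
  ring

lemma srefl_invol (α x : EV n) : srefl α (srefl α x) = x := by
  rcases eq_or_ne α 0 with rfl | h
  · simp [srefl]
  have hα : ⟪α, α⟫ ≠ 0 := ne_of_gt (inner_self_pos0 h)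
  have hc : 2 * ⟪srefl α x, α⟫ / ⟪α, α⟫ = -(2 * ⟪x, α⟫ / ⟪α, α⟫) := by
    simp only [srefl, inner_sub_left, real_inner_smul_left]
    revert hα
    generalize ⟪x, α⟫ = a
    generalize ⟪α, α⟫ = A
    intro hA
    field_simp
    ring
  simp only [srefl] at hc ⊢
  rw [hc]
  module


lemma neg_pos_of_not_pos {α : EV n} (hR : α ∈ c.R) (h : α ∉ c.pos) : -α ∈ c.pos := by
  by_contra h2
  exact h ((c.pos_iff α hR).mpr h2)

lemma simple_indep : LinearIndependent ℝ c.simple := by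
  have hspan : ⊤ ≤ Submodule.span ℝ (Set.range c.simple) := by
    rw [← c.span_top, Submodule.span_le]
    intro α hα
    have hmem : ∀ β ∈ c.pos, β ∈ Submodule.span ℝ (Set.range c.simple) := by
      intro β hβ
      obtain ⟨f, hf⟩ := c.pos_sum β hβ
      rw [hf]
      exact Submodule.sum_mem _ fun i _ =>
        Submodule.smul_mem _ _ (Submodule.subset_span ⟨i, rfl⟩)
    by_cases hp : α ∈ c.pos
    · exact hmem α hp
    · have := hmem (-α) (c.neg_pos_of_not_pos hα hp)
      simpa using Submodule.neg_mem _ this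
  exact linearIndependent_of_top_le_span_of_card_eq_finrank hspan (by simp)

lemma coeff_eq {f g : Fin n → ℝ}
    (hfg : ∑ i, f i • c.simple i = ∑ i, g i • c.simple i) : f = g := by
  funext j
  have h := (Fintype.linearIndependent_iff.mp c.simple_indep) (f - g) ?_ j
  · have : f j - g j = 0 := h
    linarith
  · simp only [Pi.sub_apply, sub_smul, Finset.sum_sub_distrib, hfg, sub_self]

lemma theta_mem_R : c.hishort ∈ c.R := c.pos_subset c.hishort_pos

lemma sum_ite_single (k : Fin n) (t : ℝ) :
    ∑ i, (if i = k then t else 0) • c.simple i = t • c.simple k := by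
  rw [Finset.sum_eq_single k]
  · simp
  · intro i _ hik; simp [hik]
  · simp

lemma theta_dominant (k : Fin n) : 0 ≤ ⟪c.simple k, c.hishort⟫ := by
  by_contra hneg
  push_neg at hneg
  set sk := c.simple k with hsk
  have hskR : sk ∈ c.R := c.pos_subset (c.simple_pos k)
  set t : ℝ := 2 * ⟪c.hishort, sk⟫ / ⟪sk, sk⟫ with ht
  have htneg : t < 0 := by
    apply div_neg_of_neg_of_pos
    · rw [real_inner_comm] at hneg; linarith
    · exact c.inner_self_pos' hskR
  have hβR : srefl sk c.hishort ∈ c.R := c.reflect_mem sk hskR c.hishort c.theta_mem_R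
  have hβ2 : ⟪srefl sk c.hishort, srefl sk c.hishort⟫ = 2 := by
    rw [srefl_inner, c.hishort_short]
  obtain ⟨f, hf⟩ := c.hishort_high _ hβR hβ2
  have hdiff : c.hishort - srefl sk c.hishort = t • sk := by
    simp only [srefl, ht]
    abel
  have hsum : ∑ i, ((f i : ℝ)) • c.simple i = ∑ i, (if i = k then t else 0) • c.simple i := by
    rw [← hf, c.sum_ite_single k t, ← hdiff]
  have hck := congrFun (c.coeff_eq hsum) k
  simp at hck
  have : (0:ℝ) ≤ f k := Nat.cast_nonneg _
  linarith

lemma pos_theta {δ : EV n} (h : δ ∈ c.pos) : 0 ≤ ⟪δ, c.hishort⟫ := by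
  obtain ⟨f, hf⟩ := c.pos_sum δ h
  rw [hf, sum_inner]
  apply Finset.sum_nonneg
  intro i _
  rw [real_inner_smul_left]
  exact mul_nonneg (Nat.cast_nonneg _) (c.theta_dominant i)

lemma pos_of_theta {γ : EV n} (hγ : γ ∈ c.R) (h : 0 < ⟪γ, c.hishort⟫) : γ ∈ c.pos := by
  by_contra hn
  have h2 := c.pos_theta (c.neg_pos_of_not_pos hγ hn)
  rw [inner_neg_left] at h2
  linarith

lemma srefl_simple_pos {α : EV n} (hα : α ∈ c.pos) (k : Fin n) (hne : α ≠ c.simple k) :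
    srefl (c.simple k) α ∈ c.pos := by
  set sk := c.simple k with hsk
  have hskR : sk ∈ c.R := c.pos_subset (c.simple_pos k)
  have hαR : α ∈ c.R := c.pos_subset hα
  have hmem : srefl sk α ∈ c.R := c.reflect_mem sk hskR α hαR
  by_contra hn
  have hneg : -(srefl sk α) ∈ c.pos := c.neg_pos_of_not_pos hmem hn
  obtain ⟨f, hf⟩ := c.pos_sum α hα
  obtain ⟨g, hg⟩ := c.pos_sum _ hneg
  set t : ℝ := 2 * ⟪α, sk⟫ / ⟪sk, sk⟫ with ht
  have hsum : ∑ i, (((f i : ℝ)) + (g i : ℝ)) • c.simple i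
      = ∑ i, (if i = k then t else 0) • c.simple i := by
    have hts : α + (-(srefl sk α)) = t • sk := by
      simp only [srefl, ht]; abel
    have hsplit : ∑ i, (((f i : ℝ)) + (g i : ℝ)) • c.simple i = α + (-(srefl sk α)) := by
      conv_rhs => rw [hg, hf]
      rw [← Finset.sum_add_distrib]
      congr 1
      funext i
      rw [add_smul]
    rw [hsplit, hts, c.sum_ite_single k t]
  have hco := c.coeff_eq hsum
  have hf0 : ∀ i, i ≠ k → (f i : ℝ) = 0 := by
    intro i hik
    have := congrFun hco i
    simp only [if_neg hik] at this
    have hg0 : (0:ℝ) ≤ g i := Nat.cast_nonneg _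
    have hf0 : (0:ℝ) ≤ f i := Nat.cast_nonneg _
    linarith
  have hα_eq : α = ((f k : ℝ)) • sk := by
    rw [hf, Finset.sum_eq_single k]
    · intro i _ hik; rw [hf0 i hik, zero_smul]
    · intro habs; exact absurd (Finset.mem_univ k) habs
  rcases c.reduced sk hskR ((f k : ℝ)) (hα_eq ▸ hαR) with h1 | h1
  · rw [h1, one_smul] at hα_eq; exact hne hα_eq
  · have : (0:ℝ) ≤ f k := Nat.cast_nonneg _
    linarith

lemma two_le_normsq (hne : c.R.Nonempty) {α : EV n} (hα : α ∈ c.R) : 2 ≤ ⟪α, α⟫ := by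
  obtain ⟨β, hβ, hmin⟩ := c.R.exists_min_image (fun γ => ⟪γ, γ⟫) hne
  have h2 : ⟪β, β⟫ = 2 := c.normalized β hβ (fun γ hγ => hmin γ hγ)
  calc (2:ℝ) = ⟪β, β⟫ := h2.symm
    _ ≤ ⟪α, α⟫ := hmin α hα

lemma aRefl_fst_srefl (p z : EV n × ℝ) : (aRefl p z).1 = srefl p.1 z.1 := rfl

lemma aRefl_zero_of_fst {p : EV n × ℝ} (h : p.1 = 0) (z : EV n × ℝ) : aRefl p z = z := by
  simp [aRefl, h]

lemma srefl_self {α : EV n} (h : α ≠ 0) : srefl α α = -α := by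
  have hα : ⟪α, α⟫ ≠ 0 := ne_of_gt (inner_self_pos0 h)
  have h2 : 2 * ⟪α, α⟫ / ⟪α, α⟫ = 2 := by
    rw [mul_div_assoc, div_self hα, mul_one]
  rw [srefl, h2]
  module

lemma aRefl_sub_smul (q z p : EV n × ℝ) (t : ℝ) :
    aRefl q (z - t • p) = aRefl q z - t • aRefl q p := by
  simp only [aRefl, Prod.fst_sub, Prod.smul_fst, inner_sub_left, real_inner_smul_left]
  module

lemma aRefl_conj (q p z : EV n × ℝ) :
    aRefl (aRefl q p) (aRefl q z) = aRefl q (aRefl p z) := by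
  show aRefl q z - _ • aRefl q p = _
  rw [aRefl_fst_srefl q z, aRefl_fst_srefl q p, srefl_inner, srefl_inner, ← aRefl_sub_smul]
  rfl

lemma aRefl_neg (p z : EV n × ℝ) : aRefl p (-z) = -aRefl p z := by
  have : -z = z - (2:ℝ) • z := by module
  rw [this, aRefl_sub_smul]
  module

lemma aRefl_invol (p z : EV n × ℝ) : aRefl p (aRefl p z) = z := by
  have : aRefl p (aRefl p z) = aRefl p z - (2 * ⟪z.1, p.1⟫ / ⟪p.1, p.1⟫) • aRefl p p := by
    rw [← aRefl_sub_smul]; rfl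
  rcases eq_or_ne p.1 0 with h | h
  · rw [aRefl_zero_of_fst h, aRefl_zero_of_fst h]
  · rw [this]
    have hp : aRefl p p = -p := by
      have hα : ⟪p.1, p.1⟫ ≠ 0 := ne_of_gt (inner_self_pos0 h)
      have h2 : 2 * ⟪p.1, p.1⟫ / ⟪p.1, p.1⟫ = 2 := by
        rw [mul_div_assoc, div_self hα, mul_one]
      rw [aRefl, h2]; module
    rw [hp, aRefl]
    module
lemma nuu_pos {α : EV n} (h : α ∈ c.R) : 0 < nuu α := by
  have := c.inner_self_pos' h
  rw [nuu]; linarith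

lemma nuu_neg (α : EV n) : nuu (-α) = nuu α := by
  simp [nuu]

lemma nuu_srefl (β α : EV n) : nuu (srefl β α) = nuu α := by
  rw [nuu, srefl_inner, nuu]

lemma mem_aR {α : EV n} (h : α ∈ c.R) (j : ℤ) : (α, nuu α * j) ∈ c.aR :=
  ⟨α, h, j, rfl⟩

lemma aR_fst_mem {p : EV n × ℝ} (hp : p ∈ c.aR) : p.1 ∈ c.R := by
  obtain ⟨α, hα, j, rfl⟩ := hp; exact hα

lemma aR_fst_ne {p : EV n × ℝ} (hp : p ∈ c.aR) : p.1 ≠ 0 :=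
  c.nonzero _ (c.aR_fst_mem hp)

lemma neg_mem_aR {p : EV n × ℝ} (hp : p ∈ c.aR) : -p ∈ c.aR := by
  obtain ⟨α, hα, j, rfl⟩ := hp
  refine ⟨-α, c.neg_mem α hα, -j, ?_⟩
  rw [Prod.ext_iff]
  constructor
  · rfl
  · show -(nuu α * (j : ℝ)) = nuu (-α) * ((-j : ℤ) : ℝ)
    rw [nuu_neg]; push_cast; ring

lemma aPos_mem_aR {p : EV n × ℝ} (hp : p ∈ c.aPos) : p ∈ c.aR := hp.1

lemma aNeg_mem_aR {p : EV n × ℝ} (hp : p ∈ c.aNeg) : p ∈ c.aR := by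
  have := c.neg_mem_aR (aPos_mem_aR c hp)
  simpa using this

lemma aPos_disjoint {p : EV n × ℝ} (hp : p ∈ c.aPos) : p ∉ c.aNeg := by
  rintro ⟨hnR, hnsign⟩
  obtain ⟨hpR, hsign⟩ := hp
  have h1 : p.1 ∈ c.R := c.aR_fst_mem hpR
  simp only [Prod.snd_neg, Prod.fst_neg] at hnsign
  rcases hsign with h | ⟨h0, hpos⟩ <;> rcases hnsign with h' | ⟨h0', hpos'⟩
  · linarith
  · linarith
  · linarith
  · exact ((c.pos_iff p.1 h1).mp hpos) hpos'

lemma aR_cases {p : EV n × ℝ} (hp : p ∈ c.aR) : p ∈ c.aPos ∨ p ∈ c.aNeg := by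
  obtain ⟨α, hα, j, rfl⟩ := hp
  have hν : 0 < nuu α := c.nuu_pos hα
  rcases lt_trichotomy (0 : ℤ) j with hj | hj | hj
  · left
    refine ⟨c.mem_aR hα j, Or.inl ?_⟩
    have : (0:ℝ) < j := by exact_mod_cast hj
    exact mul_pos hν this
  · subst hj
    by_cases hpos : α ∈ c.pos
    · left
      exact ⟨c.mem_aR hα 0, Or.inr ⟨by simp, hpos⟩⟩
    · right
      refine ⟨c.neg_mem_aR (c.mem_aR hα 0), Or.inr ⟨by simp, ?_⟩⟩
      rw [Prod.fst_neg]
      exact c.neg_pos_of_not_pos hα hpos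
  · right
    refine ⟨c.neg_mem_aR (c.mem_aR hα j), Or.inl ?_⟩
    show (0:ℝ) < -(nuu α * (j:ℝ))
    have : (j:ℝ) < 0 := by exact_mod_cast hj
    nlinarith

lemma asimple_zero : c.asimple 0 = (-c.hishort, 1) := by
  simp [asimple]

lemma asimple_ne (i : Fin (n+1)) (h : i ≠ 0) :
    c.asimple i = (c.simple (i.pred h), 0) := by
  simp [asimple, h]

lemma asimple_fst_ne (i : Fin (n+1)) : (c.asimple i).1 ≠ 0 := by
  by_cases h : i = 0
  · subst h; rw [c.asimple_zero]
    simpa using c.nonzero _ c.theta_mem_R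
  · rw [c.asimple_ne i h]
    exact c.nonzero _ (c.pos_subset (c.simple_pos _))

lemma nuu_hishort : nuu c.hishort = 1 := by
  rw [nuu, c.hishort_short]; norm_num

lemma asimple_mem_aPos (i : Fin (n+1)) : c.asimple i ∈ c.aPos := by
  by_cases h : i = 0
  · subst h; rw [c.asimple_zero]
    constructor
    · refine ⟨-c.hishort, c.neg_mem _ c.theta_mem_R, 1, ?_⟩
      rw [Prod.ext_iff]
      refine ⟨rfl, ?_⟩
      show (1:ℝ) = nuu (-c.hishort) * ((1:ℤ):ℝ)
      rw [nuu_neg, c.nuu_hishort]; norm_num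
    · exact Or.inl (by norm_num)
  · rw [c.asimple_ne i h]
    constructor
    · refine ⟨c.simple (i.pred h), c.pos_subset (c.simple_pos _), 0, ?_⟩
      rw [Prod.ext_iff]
      exact ⟨rfl, by norm_num⟩
    · exact Or.inr ⟨rfl, c.simple_pos _⟩

lemma aS_ne_eq (i : Fin (n+1)) (h : i ≠ 0) (p : EV n × ℝ) :
    c.aS i p = (srefl (c.simple (i.pred h)) p.1, p.2) := by
  rw [aS, aRefl, c.asimple_ne i h, Prod.ext_iff]
  constructor
  · rfl
  · show p.2 - (2 * ⟪p.1, c.simple (i.pred h)⟫ / ⟪c.simple (i.pred h), c.simple (i.pred h)⟫) * 0 = p.2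
    ring

lemma aS_zero_eq (p : EV n × ℝ) :
    c.aS 0 p = (srefl c.hishort p.1, p.2 + ⟪p.1, c.hishort⟫) := by
  have ht : 2 * ⟪p.1, (c.asimple 0).1⟫ / ⟪(c.asimple 0).1, (c.asimple 0).1⟫
      = -⟪p.1, c.hishort⟫ := by
    rw [c.asimple_zero]
    show 2 * ⟪p.1, -c.hishort⟫ / ⟪-c.hishort, -c.hishort⟫ = -⟪p.1, c.hishort⟫
    rw [inner_neg_right, inner_neg_neg, c.hishort_short]
    ring
  rw [aS, aRefl, ht, c.asimple_zero, Prod.ext_iff]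
  constructor
  · show p.1 - (-⟪p.1, c.hishort⟫) • (-c.hishort) = srefl c.hishort p.1
    rw [srefl, c.hishort_short]
    have : 2 * ⟪p.1, c.hishort⟫ / 2 = ⟪p.1, c.hishort⟫ := by ring
    rw [this]
    module
  · show p.2 - (-⟪p.1, c.hishort⟫) * 1 = p.2 + ⟪p.1, c.hishort⟫
    ring
lemma aRefl_self {p : EV n × ℝ} (h : p.1 ≠ 0) : aRefl p p = -p := by
  have hα : ⟪p.1, p.1⟫ ≠ 0 := ne_of_gt (inner_self_pos0 h)
  have h2 : 2 * ⟪p.1, p.1⟫ / ⟪p.1, p.1⟫ = 2 := by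
    rw [mul_div_assoc, div_self hα, mul_one]
  rw [aRefl, h2]; module

lemma theta_int {α : EV n} (hα : α ∈ c.R) : ∃ m : ℤ, ⟪α, c.hishort⟫ = nuu α * m := by
  obtain ⟨m, hm⟩ := c.crys α hα c.hishort c.theta_mem_R
  refine ⟨m, ?_⟩
  have hQ : (0:ℝ) < ⟪α, α⟫ := c.inner_self_pos' hα
  have h2 : 2 * ⟪c.hishort, α⟫ = m * ⟪α, α⟫ := by
    rw [← hm, div_mul_cancel₀]
    exact ne_of_gt hQ
  rw [real_inner_comm, nuu]
  linarith

lemma theta_coeff (hne : c.R.Nonempty) {α : EV n} (hα : α ∈ c.R) :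
    ∃ m : ℤ, ⟪α, c.hishort⟫ = nuu α * m ∧ -2 ≤ m ∧ m ≤ 2 ∧ (m = -2 → α = -c.hishort) := by
  obtain ⟨m, hm⟩ := c.theta_int hα
  have hQ2 : (2:ℝ) ≤ ⟪α, α⟫ := c.two_le_normsq hne hα
  have hν : (1:ℝ) ≤ nuu α := by rw [nuu]; linarith
  have hν0 : (0:ℝ) < nuu α := by linarith
  have hcs := real_inner_mul_inner_self_le α c.hishort
  rw [c.hishort_short, hm] at hcs
  have hcs2 : (nuu α * m) * (nuu α * m) ≤ 4 * nuu α := by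
    have heq : ⟪α, α⟫ = 2 * nuu α := by rw [nuu]; ring
    rw [heq] at hcs; linarith
  have hm4 : (m:ℝ) * m ≤ 4 := by
    by_contra hcon
    push_neg at hcon
    have h1 : nuu α * nuu α * 4 < nuu α * nuu α * ((m:ℝ) * m) :=
      mul_lt_mul_of_pos_left hcon (by positivity)
    have heq : nuu α * nuu α * ((m:ℝ) * m) = (nuu α * ↑m) * (nuu α * ↑m) := by ring
    rw [heq] at h1
    have h2 : nuu α * 1 ≤ nuu α * nuu α := by nlinarith
    linarith
  have hmZ : m * m ≤ 4 := by exact_mod_cast hm4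
  have hge : -2 ≤ m := by nlinarith [mul_self_nonneg (m + 2)]
  have hle : m ≤ 2 := by nlinarith [mul_self_nonneg (m - 2)]
  refine ⟨m, hm, hge, hle, ?_⟩
  intro hm2
  subst hm2
  push_cast at hcs2
  have e1 : nuu α * nuu α ≤ nuu α := by nlinarith
  have hνone : nuu α = 1 :=
    le_antisymm (by nlinarith [mul_self_nonneg (nuu α - 1)]) hν
  have hαθ : ⟪α, c.hishort⟫ = -2 := by
    rw [hm, hνone]; push_cast; ring
  have hαα : ⟪α, α⟫ = 2 := by
    have : nuu α = ⟪α, α⟫ / 2 := rfl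
    rw [hνone] at this; linarith
  have hzero : ⟪α + c.hishort, α + c.hishort⟫ = 0 := by
    rw [inner_add_left, inner_add_right, inner_add_right, hαα, c.hishort_short]
    linarith [real_inner_comm α c.hishort, hαθ]
  have hz := inner_self_eq_zero.mp hzero
  exact eq_neg_of_add_eq_zero_left hz

lemma aS_mem_aR (i : Fin (n+1)) {p : EV n × ℝ} (hp : p ∈ c.aR) : c.aS i p ∈ c.aR := by
  obtain ⟨α, hα, j, rfl⟩ := hp
  by_cases h : i = 0
  · subst h
    rw [c.aS_zero_eq]
    obtain ⟨m, hm⟩ := c.theta_int hα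
    refine ⟨srefl c.hishort α, c.reflect_mem c.hishort c.theta_mem_R α hα, j + m, ?_⟩
    rw [Prod.ext_iff]
    refine ⟨rfl, ?_⟩
    show nuu α * (j:ℝ) + ⟪α, c.hishort⟫ = nuu (srefl c.hishort α) * ((j + m : ℤ) : ℝ)
    rw [nuu_srefl, hm]
    push_cast
    ring
  · rw [c.aS_ne_eq i h]
    refine ⟨srefl (c.simple (i.pred h)) α,
      c.reflect_mem _ (c.pos_subset (c.simple_pos _)) α hα, j, ?_⟩
    rw [Prod.ext_iff]
    refine ⟨rfl, ?_⟩
    show nuu α * (j:ℝ) = nuu (srefl (c.simple (i.pred h)) α) * (j:ℝ)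
    rw [nuu_srefl]

lemma srefl_theta_inner (α : EV n) : ⟪srefl c.hishort α, c.hishort⟫ = -⟪α, c.hishort⟫ := by
  have hθ : c.hishort ≠ 0 := c.nonzero _ c.theta_mem_R
  have h1 := srefl_inner c.hishort α c.hishort
  rw [srefl_self hθ, inner_neg_right] at h1
  linarith

lemma aS_pos (hne : c.R.Nonempty) (i : Fin (n+1)) {p : EV n × ℝ}
    (hp : p ∈ c.aPos) (hne2 : p ≠ c.asimple i) : c.aS i p ∈ c.aPos := by
  obtain ⟨⟨α, hα, j, rfl⟩, hsign⟩ := hp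
  have hsign' : 0 < nuu α * (j:ℝ) ∨ (nuu α * (j:ℝ) = 0 ∧ α ∈ c.pos) := hsign
  have hν : 0 < nuu α := c.nuu_pos hα
  have haR := c.aS_mem_aR i (c.mem_aR hα j)
  by_cases h : i = 0
  · subst h
    rw [c.aS_zero_eq] at haR ⊢
    obtain ⟨m, hm, hmge, hmle, hm2⟩ := c.theta_coeff hne hα
    refine ⟨haR, ?_⟩
    have hθR : srefl c.hishort α ∈ c.R := c.reflect_mem c.hishort c.theta_mem_R α hα
    have hcoord : nuu α * (j:ℝ) + ⟪α, c.hishort⟫ = nuu α * ((j + m : ℤ):ℝ) := by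
      rw [hm]; push_cast; ring
    rcases hsign' with hj | ⟨hj0, hpos⟩
    · have hjpos : (0:ℝ) < (j:ℝ) := by nlinarith
      have hj1 : 1 ≤ j := by exact_mod_cast Int.cast_pos.mp hjpos
      rcases lt_trichotomy (j + m) 0 with hc | hc | hc
    -- j + m < 0 : impossible unless p = asimple 0
      · exfalso
        have hmeq : m = -2 := by omega
        have hjeq : j = 1 := by omega
        have hαθ : α = -c.hishort := hm2 hmeq
        apply hne2
        rw [c.asimple_zero, Prod.ext_iff]
        subst hjeq
        refine ⟨hαθ, ?_⟩
        show nuu α * ((1:ℤ):ℝ) = 1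
        rw [hαθ, nuu_neg, c.nuu_hishort]
        norm_num
      · refine Or.inr ⟨?_, ?_⟩
        · show nuu α * (j:ℝ) + ⟪α, c.hishort⟫ = 0
          rw [hcoord, hc]
          norm_num
        · show srefl c.hishort α ∈ c.pos
          apply c.pos_of_theta hθR
          rw [c.srefl_theta_inner, hm]
          have hmneg : m ≤ -1 := by omega
          have : ((m:ℝ)) ≤ -1 := by exact_mod_cast hmneg
          nlinarith
      · apply Or.inl
        show 0 < nuu α * (j:ℝ) + ⟪α, c.hishort⟫
        rw [hcoord]
        have : (0:ℝ) < ((j + m : ℤ):ℝ) := by exact_mod_cast hc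
        nlinarith
    · have hj0' : j = 0 := by
        have : (j:ℝ) = 0 := by
          rcases mul_eq_zero.mp hj0 with h' | h'
          · exact absurd h' (ne_of_gt hν)
          · exact h'
        exact_mod_cast this
      have hθnn : 0 ≤ ⟪α, c.hishort⟫ := c.pos_theta hpos
      rcases eq_or_lt_of_le hθnn with hθ0 | hθ0
      · refine Or.inr ⟨?_, ?_⟩
        · show nuu α * (j:ℝ) + ⟪α, c.hishort⟫ = 0
          rw [← hθ0, hj0]; ring
        · show srefl c.hishort α ∈ c.pos
          have : srefl c.hishort α = α := by
            rw [srefl, ← hθ0]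
            simp
          rw [this]; exact hpos
      · apply Or.inl
        show 0 < nuu α * (j:ℝ) + ⟪α, c.hishort⟫
        rw [hj0]
        linarith
  · rw [c.aS_ne_eq i h] at haR ⊢
    refine ⟨haR, ?_⟩
    rcases hsign' with hj | ⟨hj0, hpos⟩
    · exact Or.inl hj
    · refine Or.inr ⟨hj0, ?_⟩
      apply c.srefl_simple_pos hpos (i.pred h)
      intro hαs
      apply hne2
      rw [c.asimple_ne i h, Prod.ext_iff]
      exact ⟨hαs, hj0⟩

lemma aS_flip (hne : c.R.Nonempty) (i : Fin (n+1)) {p : EV n × ℝ}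
    (hp : p ∈ c.aPos) (hn : c.aS i p ∈ c.aNeg) : p = c.asimple i := by
  by_contra h
  exact c.aPos_disjoint (c.aS_pos hne i hp h) hn
def revW (L : List (Fin (n+1))) : EV n × ℝ → EV n × ℝ :=
  L.foldr (fun i f => c.aS i ∘ f) id

lemma affWord_foldl_init (L : List (Fin (n+1))) (g : EV n × ℝ → EV n × ℝ) :
    L.foldl (fun f i => c.aS i ∘ f) g = c.affWord L ∘ g := by
  induction L generalizing g with
  | nil => rfl
  | cons i L ih =>
    show L.foldl _ (c.aS i ∘ g) = _
    rw [ih (c.aS i ∘ g)]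
    show _ = (L.foldl (fun f i => c.aS i ∘ f) (c.aS i ∘ id)) ∘ g
    rw [ih (c.aS i ∘ id)]
    rfl

lemma affWord_cons (i : Fin (n+1)) (L : List (Fin (n+1))) :
    c.affWord (i :: L) = c.affWord L ∘ c.aS i := by
  show L.foldl _ (c.aS i ∘ id) = _
  rw [c.affWord_foldl_init]
  rfl

lemma affWord_append (L1 L2 : List (Fin (n+1))) :
    c.affWord (L1 ++ L2) = c.affWord L2 ∘ c.affWord L1 := by
  induction L1 with
  | nil => rfl
  | cons i L ih => rw [List.cons_append, c.affWord_cons, c.affWord_cons, ih]; rfl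

lemma revW_cons (i : Fin (n+1)) (L : List (Fin (n+1))) :
    c.revW (i :: L) = c.aS i ∘ c.revW L := rfl

lemma revW_append (L1 L2 : List (Fin (n+1))) :
    c.revW (L1 ++ L2) = c.revW L1 ∘ c.revW L2 := by
  induction L1 with
  | nil => rfl
  | cons i L ih => rw [List.cons_append, c.revW_cons, c.revW_cons, ih]; rfl

lemma aS_invol (i : Fin (n+1)) (z : EV n × ℝ) : c.aS i (c.aS i z) = z :=
  aRefl_invol _ _

lemma revW_affWord (L : List (Fin (n+1))) : ∀ z, c.revW L (c.affWord L z) = z := by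
  induction L with
  | nil => intro z; rfl
  | cons i L ih =>
    intro z
    rw [c.affWord_cons]
    show c.aS i (c.revW L (c.affWord L (c.aS i z))) = z
    rw [ih]
    exact c.aS_invol i z

lemma affWord_revW (L : List (Fin (n+1))) : ∀ z, c.affWord L (c.revW L z) = z := by
  induction L with
  | nil => intro z; rfl
  | cons i L ih =>
    intro z
    rw [c.affWord_cons, c.revW_cons]
    show c.affWord L (c.aS i (c.aS i (c.revW L z))) = z
    rw [c.aS_invol]
    exact ih z

lemma affWord_mem_aR (L : List (Fin (n+1))) {p : EV n × ℝ} (hp : p ∈ c.aR) :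
    c.affWord L p ∈ c.aR := by
  induction L generalizing p with
  | nil => exact hp
  | cons i L ih =>
    rw [c.affWord_cons]
    exact ih (c.aS_mem_aR i hp)

lemma revW_mem_aR (L : List (Fin (n+1))) {p : EV n × ℝ} (hp : p ∈ c.aR) :
    c.revW L p ∈ c.aR := by
  induction L with
  | nil => exact hp
  | cons i L ih =>
    rw [c.revW_cons]
    exact c.aS_mem_aR i (ih)

lemma lamSeq_eq (L : List (Fin (n+1))) (k : Fin L.length) :
    c.lamSeq L k = c.revW (L.take k) (c.asimple (L.get k)) := rfl

lemma lamSeq_mem_aR (L : List (Fin (n+1))) (k : Fin L.length) :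
    c.lamSeq L k ∈ c.aR := by
  rw [c.lamSeq_eq]
  exact c.revW_mem_aR _ (c.asimple_mem_aPos (L.get k)).1

lemma aS_asimple (i : Fin (n+1)) : c.aS i (c.asimple i) = -(c.asimple i) :=
  aRefl_self (c.asimple_fst_ne i)

lemma affWord_take_succ (L : List (Fin (n+1))) (k : Fin L.length) :
    c.affWord (L.take (k+1)) (c.lamSeq L k) = -(c.asimple (L.get k)) := by
  have htake : L.take (k+1) = L.take k ++ [L.get k] := by
    rw [← List.take_concat_get k.isLt, List.concat_eq_append]
    rfl
  rw [htake, c.affWord_append]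
  show c.affWord [L.get k] (c.affWord (L.take k) (c.revW (L.take k) (c.asimple (L.get k)))) = _
  rw [c.affWord_revW]
  show c.aS (L.get k) (c.asimple (L.get k)) = _
  exact c.aS_asimple (L.get k)

lemma aRefl_revW (M : List (Fin (n+1))) (p : EV n × ℝ) :
    ∀ z, aRefl (c.revW M p) z = c.revW M (aRefl p (c.affWord M z)) := by
  induction M generalizing p with
  | nil => intro z; rfl
  | cons i M ih =>
    intro z
    rw [c.revW_cons, c.affWord_cons]
    show aRefl (c.aS i (c.revW M p)) z = c.aS i (c.revW M (aRefl p (c.affWord M (c.aS i z))))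
    rw [← ih]
    have hconj := aRefl_conj (c.asimple i) (c.revW M p) (c.aS i z)
    have hzz : c.aS i (c.aS i z) = z := c.aS_invol i z
    show aRefl (c.aS i (c.revW M p)) z = c.aS i (aRefl (c.revW M p) (c.aS i z))
    calc aRefl (c.aS i (c.revW M p)) z
        = aRefl (c.aS i (c.revW M p)) (c.aS i (c.aS i z)) := by rw [hzz]
      _ = aRefl (c.asimple i) (aRefl (c.revW M p) (c.aS i z)) := hconj
      _ = c.aS i (aRefl (c.revW M p) (c.aS i z)) := rfl

lemma crossing (hne : c.R.Nonempty) :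
    ∀ (M : List (Fin (n+1))) (p : EV n × ℝ), p ∈ c.aPos → c.affWord M p ∈ c.aNeg →
      ∃ k : Fin M.length, c.lamSeq M k = p := by
  intro M
  induction M with
  | nil => intro p hp hneg; exact absurd hneg (c.aPos_disjoint hp)
  | cons i M ih =>
    intro p hp hneg
    rw [c.affWord_cons] at hneg
    by_cases hpi : p = c.asimple i
    · refine ⟨⟨0, by simp⟩, ?_⟩
      rw [c.lamSeq_eq]
      exact hpi.symm
    · have h1 : c.aS i p ∈ c.aPos := c.aS_pos hne i hp hpi
      obtain ⟨k, hk⟩ := ih (c.aS i p) h1 hneg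
      refine ⟨⟨k + 1, by simpa using Nat.succ_lt_succ k.isLt⟩, ?_⟩
      rw [c.lamSeq_eq]
      have htake : (i :: M).take ((k:ℕ)+1) = i :: M.take k := rfl
      have hget : (i :: M).get ⟨(k:ℕ)+1, by simpa using Nat.succ_lt_succ k.isLt⟩ = M.get k := rfl
      rw [htake, hget, c.revW_cons]
      show c.aS i (c.revW (M.take k) (c.asimple (M.get k))) = p
      rw [← c.lamSeq_eq, hk]
      exact c.aS_invol i p
lemma lamSeq_take (L : List (Fin (n+1))) (i : ℕ) (hi : i ≤ L.length)
    (k : Fin (L.take i).length) (h2 : (k:ℕ) < L.length) :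
    c.lamSeq (L.take i) k = c.lamSeq L ⟨k, h2⟩ := by
  rw [c.lamSeq_eq, c.lamSeq_eq]
  have ht : (L.take i).take (k:ℕ) = L.take (k:ℕ) := by
    rw [List.take_take]
    congr 1
    have := k.isLt
    simp only [List.length_take] at this
    omega
  have hg : (L.take i).get k = L.get ⟨k, h2⟩ := by
    simp [List.get_eq_getElem, List.getElem_take]
  rw [ht, hg]

lemma lamSeq_add (L : List (Fin (n+1))) (i : ℕ) (hi : i ≤ L.length)
    (k : Fin (L.drop i).length) (h2 : i + (k:ℕ) < L.length) :
    c.lamSeq L ⟨i + k, h2⟩ = c.revW (L.take i) (c.lamSeq (L.drop i) k) := by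
  rw [c.lamSeq_eq, c.lamSeq_eq]
  have hget : L.get ⟨i + k, h2⟩ = (L.drop i).get k := by
    simp [List.get_eq_getElem, List.getElem_drop]
  rw [hget]
  show c.revW (L.take (i + (k:ℕ))) _ = _
  rw [List.take_add, c.revW_append]
  rfl

lemma pi_neg {π : EV n × ℝ → EV n × ℝ} (hπ : c.IsPi π) {q : EV n × ℝ}
    (hq : q ∈ c.aR) (h : π q ∈ c.aNeg) : q ∈ c.aNeg := by
  rcases c.aR_cases hq with hpos | hneg
  · exfalso
    have hmem : π q ∈ c.aPos := by
      rw [← hπ.2]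
      exact Set.mem_image_of_mem π hpos
    exact c.aPos_disjoint hmem h
  · exact hneg

end RootCtx


open RootCtx in
/-- Let 0 ≠ b ∈ P₊ with a reduced decomposition b = π_r s_{j_l}⋯s_{j_1}
in Ŵ and λ-sequence {α̃¹,…,α̃^l}, and let a < i.  Then exactly one of the following
holds: s_{α̃^i}(α̃^a) is a negative affine root, or s_{α̃^i}(α̃^a) = α̃^p for some p < i.
In particular, s_{α̃^i}(α̃^a) ∈ R̃₊ iff s_{α̃^i}(α̃^a) ∈ {α̃¹,…,α̃^{i−1}}. -/
theorem lamSeq_reflection_dichotomy {n : ℕ} (c : RootCtx n)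
    (b : EV n) (hb : b ∈ c.PplusSet) (hb0 : b ≠ 0)
    (π : EV n × ℝ → EV n × ℝ) (L : List (Fin (n + 1)))
    (hπ : c.IsPi π) (hdec : transl b = π ∘ c.affWord L)
    (hred : L.length = c.aLen (transl b))
    (a i : Fin L.length) (hai : a < i) :
    Xor' (aRefl (c.lamSeq L i) (c.lamSeq L a) ∈ c.aNeg)
         (∃ p : Fin L.length, p < i ∧
            c.lamSeq L p = aRefl (c.lamSeq L i) (c.lamSeq L a)) ∧
    (aRefl (c.lamSeq L i) (c.lamSeq L a) ∈ c.aPos ↔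
      ∃ p : Fin L.length, p < i ∧
        c.lamSeq L p = aRefl (c.lamSeq L i) (c.lamSeq L a)) := by
  classical
  have hne : c.R.Nonempty := by
    rcases Nat.eq_zero_or_pos n with hn | hn
    · exfalso
      apply hb0
      subst hn
      ext x
      exact x.elim0
    · exact ⟨c.simple ⟨0, hn⟩, c.pos_subset (c.simple_pos _)⟩
  -- every element of λ(ŵ) occurs in the λ-sequence
  have hsub : ∀ p ∈ c.aLam (transl b), ∃ k : Fin L.length, c.lamSeq L k = p := by
    rintro p ⟨hp1, hp2⟩
    rw [hdec] at hp2
    have hq : c.affWord L p ∈ c.aR := c.affWord_mem_aR L hp1.1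
    have hq2 : c.affWord L p ∈ c.aNeg := c.pi_neg hπ hq hp2
    exact c.crossing hne L p hp1 hq2
  -- counting
  set S : Finset (EV n × ℝ) :=
    Finset.image (fun k : Fin L.length => c.lamSeq L k) Finset.univ with hS
  have hsub2 : c.aLam (transl b) ⊆ ↑S := by
    intro p hp
    obtain ⟨k, hk⟩ := hsub p hp
    simp only [hS, Finset.coe_image, Finset.coe_univ, Set.image_univ, Set.mem_range]
    exact ⟨k, hk⟩
  have hlen : (c.aLam (transl b)).ncard = L.length := hred.symm
  have hcard1 : (c.aLam (transl b)).ncard ≤ S.card := by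
    rw [← Set.ncard_coe_finset]
    exact Set.ncard_le_ncard hsub2 S.finite_toSet
  have hcard2 : S.card ≤ L.length := by
    calc S.card ≤ (Finset.univ : Finset (Fin L.length)).card := Finset.card_image_le
      _ = L.length := by simp
  have hScard : S.card = L.length := le_antisymm hcard2 (hlen ▸ hcard1)
  have hEq : c.aLam (transl b) = ↑S := by
    apply Set.eq_of_subset_of_ncard_le hsub2 _ S.finite_toSet
    rw [Set.ncard_coe_finset, hScard, hlen]
  have hmem : ∀ k : Fin L.length, c.lamSeq L k ∈ c.aLam (transl b) := by
    intro k
    rw [hEq]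
    simp only [hS, Finset.coe_image, Finset.coe_univ, Set.image_univ, Set.mem_range]
    exact ⟨k, rfl⟩
  have hposk : ∀ k : Fin L.length, c.lamSeq L k ∈ c.aPos := fun k => (hmem k).1
  have hinj : Function.Injective (fun k : Fin L.length => c.lamSeq L k) := by
    have huniv : S.card = (Finset.univ : Finset (Fin L.length)).card := by
      rw [hScard]; simp
    have hinjOn := Finset.card_image_iff.mp huniv
    intro x y hxy
    exact hinjOn (Finset.mem_coe.mpr (Finset.mem_univ x)) (Finset.mem_coe.mpr (Finset.mem_univ y)) hxy
  -- prefix words send earlier λ-sequence elements to negative roots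
  have hCneg : ∀ a' i' : Fin L.length, a' < i' →
      c.affWord (L.take (i':ℕ)) (c.lamSeq L a') ∈ c.aNeg := by
    intro a' i' hai'
    by_contra hq
    have hqR : c.affWord (L.take (i':ℕ)) (c.lamSeq L a') ∈ c.aR :=
      c.affWord_mem_aR _ (c.lamSeq_mem_aR L a')
    have hqpos : c.affWord (L.take (i':ℕ)) (c.lamSeq L a') ∈ c.aPos :=
      (c.aR_cases hqR).resolve_right hq
    have hfull : transl b (c.lamSeq L a') ∈ c.aNeg := (hmem a').2
    rw [hdec] at hfull
    have h2 : c.affWord L (c.lamSeq L a') ∈ c.aNeg :=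
      c.pi_neg hπ (c.affWord_mem_aR L (c.lamSeq_mem_aR L a')) hfull
    have hw : c.affWord L
        = c.affWord (L.drop (i':ℕ)) ∘ c.affWord (L.take (i':ℕ)) := by
      conv_lhs => rw [show L = L.take (i':ℕ) ++ L.drop (i':ℕ) from (List.take_append_drop _ L).symm]
      rw [c.affWord_append]
    rw [hw] at h2
    obtain ⟨k', hk'⟩ := c.crossing hne (L.drop (i':ℕ)) _ hqpos h2
    have hik : (i':ℕ) + (k':ℕ) < L.length := by
      have h3 := k'.isLt
      simp only [List.length_drop] at h3
      omega
    have heq2 : c.lamSeq L ⟨(i':ℕ) + (k':ℕ), hik⟩ = c.lamSeq L a' := by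
      rw [c.lamSeq_add L (i':ℕ) i'.isLt.le k' hik, hk']
      exact c.revW_affWord _ _
    have hv : ((i':ℕ) + (k':ℕ)) = (a':ℕ) := by
      simpa using congrArg Fin.val (hinj heq2)
    have hav : (a':ℕ) < (i':ℕ) := hai'
    omega
  -- main setup
  set β := aRefl (c.lamSeq L i) (c.lamSeq L a) with hβ
  have hrefl : ∀ z, aRefl (c.lamSeq L i) z
      = c.revW (L.take (i:ℕ)) (aRefl (c.asimple (L.get i)) (c.affWord (L.take (i:ℕ)) z)) := by
    intro z
    rw [c.lamSeq_eq]
    exact c.aRefl_revW (L.take (i:ℕ)) _ z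
  have hβR : β ∈ c.aR := by
    rw [hβ, hrefl]
    apply c.revW_mem_aR
    exact c.aS_mem_aR (L.get i) (c.affWord_mem_aR _ (c.lamSeq_mem_aR L a))
  have hi1 : (i:ℕ) + 1 ≤ L.length := i.isLt
  have hkey : c.affWord (L.take ((i:ℕ)+1)) β ∈ c.aNeg := by
    have htake : L.take ((i:ℕ)+1) = L.take (i:ℕ) ++ [L.get i] := by
      rw [← List.take_concat_get i.isLt, List.concat_eq_append]
      rfl
    rw [htake, c.affWord_append, hβ, hrefl]
    show c.affWord [L.get i] (c.affWord (L.take (i:ℕ))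
      (c.revW (L.take (i:ℕ)) (aRefl (c.asimple (L.get i))
        (c.affWord (L.take (i:ℕ)) (c.lamSeq L a))))) ∈ c.aNeg
    rw [c.affWord_revW]
    show c.aS (L.get i) (c.aS (L.get i) (c.affWord (L.take (i:ℕ)) (c.lamSeq L a))) ∈ c.aNeg
    rw [c.aS_invol]
    exact hCneg a i hai
  by_cases hβneg : β ∈ c.aNeg
  · have hnotex : ¬∃ p : Fin L.length, p < i ∧ c.lamSeq L p = β := by
      rintro ⟨p, _, hp⟩
      exact c.aPos_disjoint (hp ▸ hposk p) hβneg
    refine ⟨Or.inl ⟨hβneg, hnotex⟩, ?_, ?_⟩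
    · intro hβpos
      exact absurd hβneg (c.aPos_disjoint hβpos)
    · intro h
      exact absurd h hnotex
  · have hβpos : β ∈ c.aPos := (c.aR_cases hβR).resolve_right hβneg
    obtain ⟨k, hk⟩ := c.crossing hne (L.take ((i:ℕ)+1)) β hβpos hkey
    have hklen : (k:ℕ) < (i:ℕ)+1 := by
      have h3 := k.isLt
      simp only [List.length_take] at h3
      omega
    have hkL : (k:ℕ) < L.length := by omega
    have hk2 : c.lamSeq L ⟨(k:ℕ), hkL⟩ = β := by
      rw [← c.lamSeq_take L ((i:ℕ)+1) hi1 k hkL]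
      exact hk
    have hki : (k:ℕ) ≠ (i:ℕ) := by
      intro hkeq
      have hieq : c.lamSeq L i = β := by
        rw [← hk2]
        congr 1
        exact Fin.ext hkeq.symm
      have hfst : (c.lamSeq L i).1 ≠ 0 := c.aR_fst_ne (c.lamSeq_mem_aR L i)
      have h2 : aRefl (c.lamSeq L i) β = c.lamSeq L a := by
        rw [hβ]
        exact aRefl_invol _ _
      rw [← hieq, aRefl_self hfst] at h2
      have hneg2 : c.lamSeq L a ∈ c.aNeg := by
        show -(c.lamSeq L a) ∈ c.aPos
        rw [← h2, neg_neg]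
        exact hposk i
      exact c.aPos_disjoint (hposk a) hneg2
    have hklt : (⟨(k:ℕ), hkL⟩ : Fin L.length) < i := by
      have hv : (k:ℕ) < (i:ℕ) := by omega
      exact hv
    refine ⟨Or.inr ⟨⟨⟨(k:ℕ), hkL⟩, hklt, hk2⟩, hβneg⟩, ?_, ?_⟩
    · intro _
      exact ⟨⟨(k:ℕ), hkL⟩, hklt, hk2⟩
    · intro _
      exact hβpos
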